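/- arXiv:2603.10602 — 3 statements merged into one kernel-verified Lean document; each statement's English description precedes it below -/
import Mathlib

section
/- Let Ω ⊆ ℝ^d be open, r > 0, E := {x ∈ Ω : B(x,r) ⊆ Ω}, and let f ∈ L¹(Ω) with f ≥ 0 and ∫_Ω f > 0. Set M := ∫_E f and suppose M > 0. Let {x_j}_{j∈J} ⊆ E be a countable family with E ⊆ ⋃_j B(x_j, r/2) such that each point of ℝ^d lies in at most N_d of the balls B(x_j, r). Then there exists j₀ ∈ J with ∫_{B(x_{j₀}, r/2)} f ≥ (M / (2 N_d ∫_Ω f)) · ∫_{B(x_{j₀}, r)} f. -/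
open MeasureTheory Metric Set
open scoped ENNReal

/-- **Existence of a good ball.** Let `E = Ω₋ᵣ` be the `r`-interior of the open set `Ω`,
`f ≥ 0` integrable on `Ω` with positive mass `M` on `E`. Given a countable family of
centers in `E` whose half-balls cover `E` and whose `r`-balls have overlap at most `N_d`,
some ball satisfies `∫_{B(x_{j₀},r/2)} f ≥ (M / (2 N_d ∫_Ω f)) ∫_{B(x_{j₀},r)} f`. -/
theorem exists_good_ball {d : ℕ} (Ω : Set (EuclideanSpace ℝ (Fin d))) (hΩ : IsOpen Ω)
    (r : ℝ) (hr : 0 < r) (f : EuclideanSpace ℝ (Fin d) → ℝ) (hmeas : Measurable f)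
    (hf : ∀ x, 0 ≤ f x) (hint : IntegrableOn f Ω) (hpos : 0 < ∫ x in Ω, f x)
    (E : Set (EuclideanSpace ℝ (Fin d))) (hE : E = {x ∈ Ω | ball x r ⊆ Ω})
    (hM : 0 < ∫ x in E, f x)
    {ι : Type*} [Countable ι] (xj : ι → EuclideanSpace ℝ (Fin d))
    (hxj : ∀ j, xj j ∈ E) (hcover : E ⊆ ⋃ j, ball (xj j) (r / 2))
    (Nd : ℕ) (hNd : 0 < Nd)
    (hoverlap : ∀ y : EuclideanSpace ℝ (Fin d),
      ({j | y ∈ ball (xj j) r}).Finite ∧ ({j | y ∈ ball (xj j) r}).ncard ≤ Nd) :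
    ∃ j₀ : ι, ((∫ x in E, f x) / (2 * Nd * ∫ x in Ω, f x)) * ∫ x in ball (xj j₀) r, f x ≤
      ∫ x in ball (xj j₀) (r / 2), f x := by
  by_contra hcon
  push_neg at hcon
  set g : EuclideanSpace ℝ (Fin d) → ℝ≥0∞ := fun x => ENNReal.ofReal (f x) with hg
  have hgmeas : Measurable g := hmeas.ennreal_ofReal
  set M : ℝ := ∫ x in E, f x with hMdef
  set A : ℝ := ∫ x in Ω, f x with hAdef
  set c : ℝ := M / (2 * Nd * A) with hcdef
  have hc : 0 < c := by positivity
  have hball : ∀ j, ball (xj j) r ⊆ Ω := fun j => (hE ▸ hxj j).2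
  have hEsub : E ⊆ Ω := fun x hx => (hE ▸ hx).1
  have hhalf : ∀ j, ball (xj j) (r / 2) ⊆ ball (xj j) r :=
    fun j => ball_subset_ball (by linarith)
  have hnn : ∀ (s : Set (EuclideanSpace ℝ (Fin d))),
      0 ≤ᵐ[volume.restrict s] f := fun s => Filter.Eventually.of_forall hf
  have hA : ENNReal.ofReal A = ∫⁻ x in Ω, g x :=
    ofReal_integral_eq_lintegral_ofReal hint (hnn Ω)
  have key : ∀ j, ∫⁻ x in ball (xj j) (r / 2), g x ≤
      ENNReal.ofReal c * ∫⁻ x in ball (xj j) r, g x := by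
    intro j
    have hif : IntegrableOn f (ball (xj j) r) := hint.mono_set (hball j)
    have hih : IntegrableOn f (ball (xj j) (r / 2)) := hif.mono_set (hhalf j)
    rw [← ofReal_integral_eq_lintegral_ofReal hif (hnn _),
      ← ofReal_integral_eq_lintegral_ofReal hih (hnn _), ← ENNReal.ofReal_mul hc.le]
    exact ENNReal.ofReal_le_ofReal (hcon j).le
  have h1 : ENNReal.ofReal M ≤ ∫⁻ x in E, g x :=
    le_of_eq (ofReal_integral_eq_lintegral_ofReal (hint.mono_set hEsub) (hnn E))
  have h2 : (∫⁻ x in E, g x) ≤ ∑' j, ∫⁻ x in ball (xj j) (r / 2), g x :=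
    le_trans (lintegral_mono_set hcover) (lintegral_iUnion_le _ _)
  have h3 : (∑' j, ∫⁻ x in ball (xj j) (r / 2), g x) ≤
      ENNReal.ofReal c * ∑' j, ∫⁻ x in ball (xj j) r, g x := by
    rw [← ENNReal.tsum_mul_left]
    exact ENNReal.tsum_le_tsum key
  have h4 : (∑' j, ∫⁻ x in ball (xj j) r, g x) ≤ (Nd : ℝ≥0∞) * ∫⁻ x in Ω, g x := by
    have hpt : ∀ x, (∑' j, (ball (xj j) r).indicator g x) ≤
        (Nd : ℝ≥0∞) * Ω.indicator g x := by
      intro x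
      obtain ⟨hfin, hcard⟩ := hoverlap x
      have heq : (∑' j, (ball (xj j) r).indicator g x) =
          ∑ j ∈ hfin.toFinset, (ball (xj j) r).indicator g x := by
        refine tsum_eq_sum ?_
        intro j hj
        simp only [Set.Finite.mem_toFinset, Set.mem_setOf_eq] at hj
        simp [Set.indicator_of_notMem hj]
      rw [heq]
      by_cases hx : x ∈ Ω
      · calc (∑ j ∈ hfin.toFinset, (ball (xj j) r).indicator g x)
            ≤ ∑ _j ∈ hfin.toFinset, g x := by
              refine Finset.sum_le_sum fun j _ => ?_
              exact Set.indicator_le_self _ _ x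
          _ = (hfin.toFinset.card : ℝ≥0∞) * g x := by
              rw [Finset.sum_const, nsmul_eq_mul]
          _ ≤ (Nd : ℝ≥0∞) * g x := by
              gcongr
              have hle : hfin.toFinset.card ≤ Nd := by
                rw [← Set.ncard_eq_toFinset_card _ hfin]; exact hcard
              exact_mod_cast hle
          _ = (Nd : ℝ≥0∞) * Ω.indicator g x := by rw [Set.indicator_of_mem hx]
      · have : ∀ j ∈ hfin.toFinset, (ball (xj j) r).indicator g x = 0 := by
          intro j hj
          simp only [Set.Finite.mem_toFinset, Set.mem_setOf_eq] at hj
          exact absurd (hball j hj) hx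
        rw [Finset.sum_eq_zero this]
        exact zero_le
    calc (∑' j, ∫⁻ x in ball (xj j) r, g x)
        = ∑' j, ∫⁻ x, (ball (xj j) r).indicator g x := by
          simp_rw [lintegral_indicator measurableSet_ball]
      _ = ∫⁻ x, ∑' j, (ball (xj j) r).indicator g x :=
          (lintegral_tsum fun j => (hgmeas.indicator measurableSet_ball).aemeasurable).symm
      _ ≤ ∫⁻ x, (Nd : ℝ≥0∞) * Ω.indicator g x := lintegral_mono hpt
      _ = (Nd : ℝ≥0∞) * ∫⁻ x in Ω, g x := by
          rw [lintegral_const_mul _ (hgmeas.indicator hΩ.measurableSet),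
            lintegral_indicator hΩ.measurableSet]
  have hfinal : ENNReal.ofReal M ≤ ENNReal.ofReal (M / 2) := by
    have := h1.trans (h2.trans (h3.trans (mul_le_mul_right h4 _)))
    rw [← hA] at this
    calc ENNReal.ofReal M ≤ ENNReal.ofReal c * ((Nd : ℝ≥0∞) * ENNReal.ofReal A) := this
      _ = ENNReal.ofReal (c * (Nd * A)) := by
          rw [ENNReal.ofReal_mul hc.le, ENNReal.ofReal_mul (by positivity)]
          norm_num [ENNReal.ofReal_natCast]
      _ = ENNReal.ofReal (M / 2) := by
          congr 1
          rw [hcdef]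
          field_simp
  have : M ≤ M / 2 := by
    have := (ENNReal.ofReal_le_ofReal_iff (by positivity)).mp hfinal
    linarith
  linarith
end

section
/- Let Ω ⊆ ℝ^d be open, r > 0, f ∈ L¹(Ω) nonnegative with ∫_Ω f = N > 0 and ∫_{Ω_{−r}} f = M > 0. Then there exists x₀ ∈ Ω_{−r} with B(x₀, r) ⊆ Ω such that ∫_{B(x₀, r/2)} f ≥ (M / (2 · 5^d · N)) · ∫_{B(x₀, r)} f, and in particular ∫_{B(x₀, r)} f > 0. -/
open MeasureTheory Metric Set ENNReal

/-- The set of centers whose `r`-ball fits inside `Ω` is closed. -/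
lemma isClosed_ballsub {d : ℕ} (Ω : Set (EuclideanSpace ℝ (Fin d))) (r : ℝ) :
    IsClosed {x : EuclideanSpace ℝ (Fin d) | ball x r ⊆ Ω} := by
  rw [← isOpen_compl_iff, Metric.isOpen_iff]
  intro x hx
  simp only [mem_compl_iff, mem_setOf_eq, not_subset] at hx
  obtain ⟨y, hy, hyΩ⟩ := hx
  refine ⟨r - dist y x, by simpa using hy, fun x' hx' => ?_⟩
  simp only [mem_compl_iff, mem_setOf_eq, not_subset]
  refine ⟨y, ?_, hyΩ⟩
  have h1 : dist y x' ≤ dist y x + dist x x' := dist_triangle y x x'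
  have h2 : dist x x' = dist x' x := dist_comm x x'
  simp only [mem_ball]
  linarith [mem_ball.mp hx']

/-- Existence of a maximal `ρ`-separated subset of a set `A`. -/
lemma exists_maximal_separated {d : ℕ} (A : Set (EuclideanSpace ℝ (Fin d))) (ρ : ℝ)
    (hρ : 0 < ρ) :
    ∃ S : Set (EuclideanSpace ℝ (Fin d)), S ⊆ A ∧
      S.Pairwise (fun a b => ρ ≤ dist a b) ∧
      ∀ y ∈ A, ∃ x ∈ S, dist y x < ρ := by
  have hch : ∀ c ⊆ {s : Set (EuclideanSpace ℝ (Fin d)) |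
      s ⊆ A ∧ s.Pairwise (fun a b => ρ ≤ dist a b)}, IsChain (· ⊆ ·) c →
      ∃ ub ∈ {s : Set (EuclideanSpace ℝ (Fin d)) |
      s ⊆ A ∧ s.Pairwise (fun a b => ρ ≤ dist a b)}, ∀ s ∈ c, s ⊆ ub := by
    intro c hc hchain
    refine ⟨⋃₀ c, ⟨?_, ?_⟩, fun s hs => subset_sUnion_of_mem hs⟩
    · exact sUnion_subset fun s hs => (hc hs).1
    · intro a ha b hb hab
      obtain ⟨s, hs, has⟩ := ha
      obtain ⟨t, ht, hbt⟩ := hb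
      rcases hchain.total hs ht with h | h
      · exact (hc ht).2 (h has) hbt hab
      · exact (hc hs).2 has (h hbt) hab
  obtain ⟨S, hS⟩ := zorn_subset _ hch
  · obtain ⟨hSA, hSsep⟩ := hS.prop
    refine ⟨S, hSA, hSsep, fun y hy => ?_⟩
    by_contra hcon
    push_neg at hcon
    have hins : insert y S ∈ {s : Set (EuclideanSpace ℝ (Fin d)) |
        s ⊆ A ∧ s.Pairwise (fun a b => ρ ≤ dist a b)} := by
      constructor
      · exact insert_subset hy hSA
      · refine hSsep.insert fun x hx hne => ⟨hcon x hx, ?_⟩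
        have h := hcon x hx
        rwa [dist_comm]
    have hsub : insert y S ⊆ S := hS.2 hins (subset_insert y S)
    have hyS : y ∈ S := hsub (mem_insert y S)
    have h0 := hcon y hyS
    rw [dist_self] at h0
    linarith

/-- 5^d overlap bound for `r`-balls with `r/2`-separated centers near a common point. -/
lemma card_le_overlap {d : ℕ} (r : ℝ) (hr : 0 < r) (y : EuclideanSpace ℝ (Fin d))
    (F : Finset (EuclideanSpace ℝ (Fin d)))
    (hsep : (F : Set (EuclideanSpace ℝ (Fin d))).Pairwise (fun a b => r / 2 ≤ dist a b))
    (hmem : ∀ x ∈ F, dist y x < r) : F.card ≤ 5 ^ d := by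
  set v := volume (ball (0 : EuclideanSpace ℝ (Fin d)) (r / 4)) with hv
  have hv0 : v ≠ 0 := (measure_ball_pos volume 0 (by linarith)).ne'
  have hvtop : v ≠ ⊤ := measure_ball_lt_top.ne
  have hdisj : PairwiseDisjoint (↑F) (fun x : EuclideanSpace ℝ (Fin d) => ball x (r / 4)) := by
    intro a ha b hb hab
    exact ball_disjoint_ball (by linarith [hsep ha hb hab])
  have hsum : ∑ x ∈ F, volume (ball x (r / 4)) =
      volume (⋃ x ∈ F, ball x (r / 4)) :=
    (measure_biUnion_finset hdisj fun _ _ => measurableSet_ball).symm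
  have hsub : (⋃ x ∈ F, ball x (r / 4)) ⊆ ball y (5 * (r / 4)) := by
    intro z hz
    simp only [mem_iUnion] at hz
    obtain ⟨x, hx, hzx⟩ := hz
    have h1 : dist z x < r / 4 := mem_ball.mp hzx
    have h2 : dist x y < r := by rw [dist_comm]; exact hmem x hx
    have := dist_triangle z x y
    simp only [mem_ball]
    linarith
  have hvol5 : volume (ball y (5 * (r / 4))) = ENNReal.ofReal (5 ^ d) * v := by
    rw [hv, Measure.addHaar_ball_mul_of_pos volume y (by norm_num : (0:ℝ) < 5) (r/4),
      finrank_euclideanSpace_fin]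
  have hcenter : ∀ x : EuclideanSpace ℝ (Fin d), volume (ball x (r / 4)) = v := fun x =>
    Measure.addHaar_ball_center volume x (r / 4)
  have hkey : (F.card : ℝ≥0∞) * v ≤ ENNReal.ofReal (5 ^ d) * v := by
    calc (F.card : ℝ≥0∞) * v = ∑ x ∈ F, volume (ball x (r / 4)) := by
          simp [hcenter, mul_comm]
      _ = volume (⋃ x ∈ F, ball x (r / 4)) := hsum
      _ ≤ volume (ball y (5 * (r / 4))) := measure_mono hsub
      _ = ENNReal.ofReal (5 ^ d) * v := hvol5
  have hcard : (F.card : ℝ≥0∞) ≤ ENNReal.ofReal (5 ^ d) :=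
    (ENNReal.mul_le_mul_iff_left hv0 hvtop).mp hkey
  have h5 : ENNReal.ofReal (5 ^ d) = ((5 ^ d : ℕ) : ℝ≥0∞) := by
    rw [show ((5:ℝ) ^ d) = ((5 ^ d : ℕ) : ℝ) by push_cast; ring, ENNReal.ofReal_natCast]
  rw [h5, Nat.cast_le] at hcard
  exact hcard

/-- **Good ball with explicit overlap constant `5^d`.** If `f ≥ 0` is integrable on the
open set `Ω` with total mass `N > 0` and mass `M > 0` on the `r`-interior `Ω₋ᵣ`, then
there is `x₀ ∈ Ω₋ᵣ` (so `B(x₀,r) ⊆ Ω`) with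
`∫_{B(x₀,r/2)} f ≥ (M/(2·5^d·N)) ∫_{B(x₀,r)} f`, and in particular `∫_{B(x₀,r)} f > 0`. -/
theorem exists_good_ball_explicit {d : ℕ} (Ω : Set (EuclideanSpace ℝ (Fin d)))
    (hΩ : IsOpen Ω) (r : ℝ) (hr : 0 < r) (f : EuclideanSpace ℝ (Fin d) → ℝ)
    (hmeas : Measurable f) (hf : ∀ x, 0 ≤ f x) (hint : IntegrableOn f Ω)
    (N M : ℝ) (hN : (∫ x in Ω, f x) = N) (hNpos : 0 < N)
    (hM : (∫ x in {x ∈ Ω | ball x r ⊆ Ω}, f x) = M) (hMpos : 0 < M) :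
    ∃ x₀ ∈ {x ∈ Ω | ball x r ⊆ Ω}, ball x₀ r ⊆ Ω ∧
      (M / (2 * 5 ^ d * N)) * ∫ x in ball x₀ r, f x ≤ ∫ x in ball x₀ (r / 2), f x ∧
      0 < ∫ x in ball x₀ r, f x := by
  classical
  set Ωr := {x ∈ Ω | ball x r ⊆ Ω} with hΩr
  set c := M / (2 * 5 ^ d * N) with hc
  have h5pos : (0:ℝ) < 5 ^ d := by positivity
  have hc0 : 0 ≤ c := by
    apply div_nonneg hMpos.le
    positivity
  have hΩrΩ : Ωr ⊆ Ω := fun x hx => hx.1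
  set g : EuclideanSpace ℝ (Fin d) → ℝ≥0∞ := fun y => ENNReal.ofReal (f y) with hgdef
  have hg : Measurable g := hmeas.ennreal_ofReal
  -- conversion between real and ENNReal integrals on subsets of Ω
  have hconv : ∀ s : Set (EuclideanSpace ℝ (Fin d)), s ⊆ Ω →
      ENNReal.ofReal (∫ x in s, f x) = ∫⁻ x in s, g x := by
    intro s hs
    exact ofReal_integral_eq_lintegral_ofReal (hint.mono_set hs)
      (Filter.Eventually.of_forall hf)
  by_contra hcon
  push_neg at hcon
  -- all balls are bad
  have hbadR : ∀ x ∈ Ωr, (∫ z in ball x (r/2), f z) ≤ c * ∫ z in ball x r, f z := by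
    intro x hx
    have hball : ball x r ⊆ Ω := hx.2
    have hI0 : 0 ≤ ∫ z in ball x r, f z :=
      setIntegral_nonneg measurableSet_ball fun z _ => hf z
    have hmono : (∫ z in ball x (r/2), f z) ≤ ∫ z in ball x r, f z := by
      apply setIntegral_mono_set (hint.mono_set hball)
        (Filter.Eventually.of_forall hf)
      exact HasSubset.Subset.eventuallyLE (ball_subset_ball (by linarith))
    have h := hcon x hx hball
    by_cases hcase : c * (∫ z in ball x r, f z) ≤ ∫ z in ball x (r/2), f z
    · have hI := h hcase
      have hJ0 : 0 ≤ ∫ z in ball x (r/2), f z :=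
        setIntegral_nonneg measurableSet_ball fun z _ => hf z
      nlinarith
    · linarith [not_le.mp hcase]
  -- ENNReal version
  have hbadE : ∀ x ∈ Ωr, (∫⁻ z in ball x (r/2), g z) ≤
      ENNReal.ofReal c * ∫⁻ z in ball x r, g z := by
    intro x hx
    rw [← hconv _ ((ball_subset_ball (by linarith)).trans hx.2),
      ← hconv _ hx.2, ← ENNReal.ofReal_mul hc0]
    exact ENNReal.ofReal_le_ofReal (hbadR x hx)
  -- maximal separated set
  obtain ⟨S, hSsub, hSsep, hScov⟩ := exists_maximal_separated Ωr (r/2) (by linarith)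
  -- countability
  have hSdisj : Pairwise (Function.onFun Disjoint fun x : ↥S => ball (↑x : EuclideanSpace ℝ (Fin d)) (r/4)) := by
    intro a b hab
    have h := hSsep a.2 b.2 (fun h => hab (Subtype.ext h))
    exact ball_disjoint_ball (by linarith)
  have hScnt : Countable ↥S := by
    have h := Measure.countable_meas_pos_of_disjoint_iUnion (μ := (volume : Measure (EuclideanSpace ℝ (Fin d))))
      (fun _ : ↥S => measurableSet_ball) hSdisj
    rw [show {i : ↥S | 0 < volume (ball (↑i : EuclideanSpace ℝ (Fin d)) (r/4))} = univ from
      eq_univ_of_forall fun i => measure_ball_pos volume _ (by linarith)] at h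
    exact countable_univ_iff.mp h
  -- covering
  have hcover : Ωr ⊆ ⋃ x : ↥S, ball (↑x : EuclideanSpace ℝ (Fin d)) (r/2) := by
    intro y hy
    obtain ⟨x, hxS, hxd⟩ := hScov y hy
    exact mem_iUnion.mpr ⟨⟨x, hxS⟩, mem_ball.mpr hxd⟩
  -- the pointwise overlap bound
  have hpt : ∀ y, (∑' x : ↥S, (ball (↑x : EuclideanSpace ℝ (Fin d)) r).indicator g y) ≤
      (5 ^ d : ℝ≥0∞) * Ω.indicator g y := by
    intro y
    by_cases hyΩ : y ∈ Ω
    · rw [indicator_of_mem hyΩ]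
      have hsplit : ∀ x : ↥S, (ball (↑x : EuclideanSpace ℝ (Fin d)) r).indicator g y =
          (ball (↑x : EuclideanSpace ℝ (Fin d)) r).indicator (fun _ => (1:ℝ≥0∞)) y * g y := by
        intro x
        by_cases h : y ∈ ball (↑x : EuclideanSpace ℝ (Fin d)) r <;> simp [h]
      rw [tsum_congr hsplit, ENNReal.tsum_mul_right]
      have hcount : (∑' x : ↥S, (ball (↑x : EuclideanSpace ℝ (Fin d)) r).indicator (fun _ => (1:ℝ≥0∞)) y) ≤ 5 ^ d := by
        rw [ENNReal.tsum_eq_iSup_sum]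
        refine iSup_le fun F => ?_
        set F' : Finset ↥S := F.filter (fun x => y ∈ ball (↑x : EuclideanSpace ℝ (Fin d)) r)
          with hF'
        have hsum : ∑ x ∈ F, (ball (↑x : EuclideanSpace ℝ (Fin d)) r).indicator
            (fun _ => (1:ℝ≥0∞)) y = F'.card := by
          have hcond : ∀ x ∈ F, (ball (↑x : EuclideanSpace ℝ (Fin d)) r).indicator
              (fun _ => (1:ℝ≥0∞)) y ≠ 0 → y ∈ ball (↑x : EuclideanSpace ℝ (Fin d)) r := by
            intro x _ hne
            by_contra hmem
            exact hne (indicator_of_notMem hmem _)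
          rw [← Finset.sum_filter_of_ne hcond, ← hF', Finset.card_eq_sum_ones, Nat.cast_sum]
          refine Finset.sum_congr rfl fun x hx => ?_
          rw [hF'] at hx
          simp [indicator_of_mem (Finset.mem_filter.mp hx).2]
        rw [hsum]
        set F'' : Finset (EuclideanSpace ℝ (Fin d)) := F'.image Subtype.val with hF''
        have hcard : F'.card = F''.card :=
          (Finset.card_image_of_injective F' Subtype.coe_injective).symm
        have hbound : F''.card ≤ 5 ^ d := by
          apply card_le_overlap r hr y
          · intro a ha b hb hab
            simp only [hF'', Finset.coe_image, mem_image] at ha hb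
            obtain ⟨a', ha', rfl⟩ := ha
            obtain ⟨b', hb', rfl⟩ := hb
            exact hSsep a'.2 b'.2 hab
          · intro x hx
            simp only [hF'', Finset.mem_image] at hx
            obtain ⟨x', hx', rfl⟩ := hx
            have := (Finset.mem_filter.mp hx').2
            rwa [mem_ball] at this
        calc (F'.card : ℝ≥0∞) = (F''.card : ℝ≥0∞) := by rw [hcard]
          _ ≤ ((5 ^ d : ℕ) : ℝ≥0∞) := Nat.cast_le.mpr hbound
          _ = 5 ^ d := by push_cast; ring
      exact mul_le_mul_left hcount _
    · have hz : ∀ x : ↥S, (ball (↑x : EuclideanSpace ℝ (Fin d)) r).indicator g y = 0 := by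
        intro x
        exact indicator_of_notMem (fun h => hyΩ ((hSsub x.2).2 h)) g
      rw [tsum_congr hz]
      simp
  -- main chain
  have hNe : (∫⁻ y in Ω, g y) = ENNReal.ofReal N := by rw [← hconv Ω subset_rfl, hN]
  have hMe : (∫⁻ y in Ωr, g y) = ENNReal.ofReal M := by rw [← hconv Ωr hΩrΩ, hM]
  have hmain : ENNReal.ofReal M ≤ ENNReal.ofReal c * ((5 ^ d : ℝ≥0∞) * ENNReal.ofReal N) := by
    calc ENNReal.ofReal M = ∫⁻ y in Ωr, g y := hMe.symm
      _ ≤ ∫⁻ y in ⋃ x : ↥S, ball (↑x : EuclideanSpace ℝ (Fin d)) (r/2), g y := lintegral_mono_set hcover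
      _ ≤ ∑' x : ↥S, ∫⁻ y in ball (↑x : EuclideanSpace ℝ (Fin d)) (r/2), g y := lintegral_iUnion_le _ _
      _ ≤ ∑' x : ↥S, ENNReal.ofReal c * ∫⁻ y in ball (↑x : EuclideanSpace ℝ (Fin d)) r, g y :=
          ENNReal.tsum_le_tsum fun x => hbadE ↑x (hSsub x.2)
      _ = ENNReal.ofReal c * ∑' x : ↥S, ∫⁻ y in ball (↑x : EuclideanSpace ℝ (Fin d)) r, g y := ENNReal.tsum_mul_left
      _ ≤ ENNReal.ofReal c * ((5 ^ d : ℝ≥0∞) * ENNReal.ofReal N) := by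
          apply mul_le_mul_right
          calc ∑' x : ↥S, ∫⁻ y in ball (↑x : EuclideanSpace ℝ (Fin d)) r, g y
              = ∑' x : ↥S, ∫⁻ y, (ball (↑x : EuclideanSpace ℝ (Fin d)) r).indicator g y := by
                refine tsum_congr fun x => ?_
                rw [lintegral_indicator measurableSet_ball]
            _ = ∫⁻ y, ∑' x : ↥S, (ball (↑x : EuclideanSpace ℝ (Fin d)) r).indicator g y :=
                (lintegral_tsum fun x => (hg.indicator measurableSet_ball).aemeasurable).symm
            _ ≤ ∫⁻ y, (5 ^ d : ℝ≥0∞) * Ω.indicator g y := lintegral_mono hpt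
            _ = (5 ^ d : ℝ≥0∞) * ∫⁻ y, Ω.indicator g y :=
                lintegral_const_mul _ (hg.indicator hΩ.measurableSet)
            _ = (5 ^ d : ℝ≥0∞) * ∫⁻ y in Ω, g y := by
                rw [lintegral_indicator hΩ.measurableSet]
            _ = (5 ^ d : ℝ≥0∞) * ENNReal.ofReal N := by rw [hNe]
  have h5e : (5 ^ d : ℝ≥0∞) = ENNReal.ofReal (5 ^ d : ℝ) := by
    rw [show ((5:ℝ) ^ d) = ((5 ^ d : ℕ) : ℝ) by push_cast; ring, ENNReal.ofReal_natCast]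
    push_cast; ring
  have hfin : ENNReal.ofReal c * ((5 ^ d : ℝ≥0∞) * ENNReal.ofReal N) =
      ENNReal.ofReal (M / 2) := by
    rw [h5e, ← ENNReal.ofReal_mul (by positivity), ← ENNReal.ofReal_mul hc0]
    congr 1
    rw [hc]
    field_simp
  rw [hfin] at hmain
  have : M ≤ M / 2 := (ENNReal.ofReal_le_ofReal_iff (by linarith)).mp hmain
  linarith
end

section
/- Let Ω ⊆ ℝ^d be open and suppose ψ ∈ L²(Ω) is continuous on Ω, not identically zero on a ball B(x₀, r) ⊆ Ω in the sense that ‖ψ‖_{L²(B(x₀, r/2))}² ≥ θ ‖ψ‖_{L²(B(x₀, r))}² > 0 for some θ ∈ (0, 1], and the rescaled function u(y) = r^{d/2} ψ(x₀ + ry)/‖ψ‖_{L²(B(x₀,r))} is Lipschitz on B(0, 3/4) with constant L > 0. Then inrad({x ∈ Ω : ψ(x) ≠ 0}) ≥ min( θ^{1/2} / (2L · vol(B(0,1/2))^{1/2}), 1/4 ) · r. -/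
open MeasureTheory Metric Set ENNReal

/-- The inner radius of a subset of `ℝ^d`. -/
noncomputable def inrad {d : ℕ} (U : Set (EuclideanSpace ℝ (Fin d))) : ℝ≥0∞ :=
  ⨆ (ρ : ℝ≥0∞) (_ : ∃ x, EMetric.ball x ρ ⊆ U), ρ

set_option maxHeartbeats 1000000 in
/-- **Chaining mass and Lipschitz control into an inradius bound.** Suppose `ψ ∈ L²(Ω)`
is continuous on the open set `Ω`, carries a `θ`-fraction of its `L²(B(x₀,r))` mass on
`B(x₀,r/2)` (with positive mass), and the rescaled normalized function
`u(y) = r^{d/2} ψ(x₀+ry)/‖ψ‖_{L²(B(x₀,r))}` is `L`-Lipschitz on `B(0,3/4)`. Then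
`inrad {ψ ≠ 0} ≥ min (√θ/(2L·vol(B(0,1/2))^{1/2})) (1/4) · r`. -/
theorem inradius_from_mass_and_lipschitz {d : ℕ} (Ω : Set (EuclideanSpace ℝ (Fin d)))
    (hΩ : IsOpen Ω) (r : ℝ) (hr : 0 < r) (x₀ : EuclideanSpace ℝ (Fin d))
    (hball : ball x₀ r ⊆ Ω) (ψ : EuclideanSpace ℝ (Fin d) → ℂ)
    (hcont : ContinuousOn ψ Ω) (hL2 : MemLp ψ 2 (volume.restrict Ω))
    (θ : ℝ) (hθ0 : 0 < θ) (hθ1 : θ ≤ 1)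
    (hpos : 0 < (eLpNorm ψ 2 (volume.restrict (ball x₀ r))).toReal)
    (hmass : θ * (eLpNorm ψ 2 (volume.restrict (ball x₀ r))).toReal ^ 2 ≤
      (eLpNorm ψ 2 (volume.restrict (ball x₀ (r / 2)))).toReal ^ 2)
    (L : ℝ) (hL : 0 < L)
    (hlip : ∀ y ∈ ball (0 : EuclideanSpace ℝ (Fin d)) (3 / 4),
      ∀ z ∈ ball (0 : EuclideanSpace ℝ (Fin d)) (3 / 4),
      ‖(r ^ ((d : ℝ) / 2) / (eLpNorm ψ 2 (volume.restrict (ball x₀ r))).toReal) •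
            ψ (x₀ + r • y) -
          (r ^ ((d : ℝ) / 2) / (eLpNorm ψ 2 (volume.restrict (ball x₀ r))).toReal) •
            ψ (x₀ + r • z)‖ ≤ L * dist y z) :
    ENNReal.ofReal
        (min (Real.sqrt θ /
            (2 * L * Real.sqrt (volume (ball (0 : EuclideanSpace ℝ (Fin d)) (1 / 2))).toReal))
          (1 / 4) * r) ≤ inrad {x ∈ Ω | ψ x ≠ 0} := by
  set N : ℝ := (eLpNorm ψ 2 (volume.restrict (ball x₀ r))).toReal with hNdef
  set V₀ : ℝ := (volume (ball (0 : EuclideanSpace ℝ (Fin d)) (1 / 2))).toReal with hV₀def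
  have hV₀pos : 0 < V₀ := by
    rw [hV₀def]
    refine ENNReal.toReal_pos (measure_ball_pos volume _ (by norm_num)).ne' measure_ball_lt_top.ne
  -- the scaling coefficient
  set c : ℝ := r ^ ((d : ℝ) / 2) / N with hcdef
  have hrd : (0:ℝ) < r ^ ((d : ℝ) / 2) := Real.rpow_pos_of_pos hr _
  have hc : 0 < c := div_pos hrd hpos
  -- max of ‖ψ‖ on closedBall x₀ (r/2)
  have hsub2 : closedBall x₀ (r / 2) ⊆ ball x₀ r := closedBall_subset_ball (by linarith)
  have hcont2 : ContinuousOn (fun x => ‖ψ x‖) (closedBall x₀ (r / 2)) :=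
    (hcont.mono (hsub2.trans hball)).norm
  obtain ⟨xs, hxs, hmax⟩ := (isCompact_closedBall x₀ (r / 2)).exists_isMaxOn
    ⟨x₀, mem_closedBall_self (by linarith)⟩ hcont2
  set M : ℝ := ‖ψ xs‖ with hMdef
  have hM0 : 0 ≤ M := norm_nonneg _
  -- L² bound on the half ball
  have hVeq : (volume (ball x₀ (r / 2))).toReal = r ^ d * V₀ := by
    have h := Measure.addHaar_ball_mul_of_pos (volume (α := EuclideanSpace ℝ (Fin d))) x₀ hr (1/2)
    rw [show r * (1/2) = r/2 by ring, finrank_euclideanSpace_fin] at h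
    rw [h, ENNReal.toReal_mul, ENNReal.toReal_ofReal (by positivity), hV₀def]
  have hEbound : (eLpNorm ψ 2 (volume.restrict (ball x₀ (r / 2)))).toReal
      ≤ Real.sqrt (r ^ d * V₀) * M := by
    have hae : ∀ᵐ x ∂(volume.restrict (ball x₀ (r / 2))), ‖ψ x‖ ≤ M := by
      filter_upwards [self_mem_ae_restrict (measurableSet_ball)] with x hx
      exact hmax (ball_subset_closedBall hx)
    have h := eLpNorm_le_of_ae_bound (p := 2) hae
    have h2 : (volume.restrict (ball x₀ (r / 2))) Set.univ ^ (2 : ℝ≥0∞).toReal⁻¹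
        * ENNReal.ofReal M ≠ ⊤ := by
      apply ENNReal.mul_ne_top _ ofReal_ne_top
      rw [Measure.restrict_apply_univ]
      exact (ENNReal.rpow_lt_top_of_nonneg (by norm_num) measure_ball_lt_top.ne).ne
    calc (eLpNorm ψ 2 (volume.restrict (ball x₀ (r / 2)))).toReal
        ≤ ((volume.restrict (ball x₀ (r / 2))) Set.univ ^ (2 : ℝ≥0∞).toReal⁻¹
            * ENNReal.ofReal M).toReal := ENNReal.toReal_mono h2 h
      _ = Real.sqrt (r ^ d * V₀) * M := by
          rw [ENNReal.toReal_mul, Measure.restrict_apply_univ, ENNReal.toReal_ofReal hM0,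
            ← ENNReal.toReal_rpow, hVeq]
          norm_num [Real.sqrt_eq_rpow]
  -- deduce lower bound on M
  have hMlb : Real.sqrt θ * N ≤ M * Real.sqrt (r ^ d * V₀) := by
    have h1 : θ * N ^ 2 ≤ (Real.sqrt (r ^ d * V₀) * M) ^ 2 := by
      refine hmass.trans (pow_le_pow_left₀ ENNReal.toReal_nonneg hEbound 2)
    have h2 : Real.sqrt (θ * N ^ 2) ≤ Real.sqrt ((Real.sqrt (r ^ d * V₀) * M) ^ 2) :=
      Real.sqrt_le_sqrt h1
    rwa [Real.sqrt_mul hθ0.le, Real.sqrt_sq ENNReal.toReal_nonneg,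
      Real.sqrt_sq (by positivity), mul_comm (Real.sqrt (r ^ d * V₀))] at h2
  -- the point y₀ in the rescaled picture
  set y₀ : EuclideanSpace ℝ (Fin d) := r⁻¹ • (xs - x₀) with hy₀def
  have hxy₀ : x₀ + r • y₀ = xs := by
    rw [hy₀def, smul_inv_smul₀ hr.ne']; abel
  have hy₀norm : ‖y₀‖ ≤ 1 / 2 := by
    rw [hy₀def, norm_smul, norm_inv, Real.norm_eq_abs, abs_of_pos hr]
    have : ‖xs - x₀‖ ≤ r / 2 := by
      rw [← dist_eq_norm]; exact mem_closedBall.mp hxs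
    rw [inv_mul_le_iff₀ hr]; linarith
  -- lower bound for a = ‖u y₀‖
  set a : ℝ := c * M with hadef
  have hrdsq : Real.sqrt (r ^ d * V₀) = r ^ ((d:ℝ)/2) * Real.sqrt V₀ := by
    have h : Real.sqrt (r ^ d) = r ^ ((d:ℝ)/2) := by
      rw [Real.sqrt_eq_rpow, ← Real.rpow_natCast r d, ← Real.rpow_mul hr.le]
      congr 1
      ring
    rw [Real.sqrt_mul (by positivity), h]
  have hsV₀ : 0 < Real.sqrt V₀ := Real.sqrt_pos.mpr hV₀pos
  have halb : Real.sqrt θ / Real.sqrt V₀ ≤ a := by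
    rw [hadef, hcdef, div_mul_eq_mul_div, div_le_div_iff₀ hsV₀ hpos]
    calc Real.sqrt θ * N ≤ M * Real.sqrt (r ^ d * V₀) := hMlb
      _ = r ^ ((d:ℝ)/2) * M * Real.sqrt V₀ := by rw [hrdsq]; ring
  have hapos : 0 < a := lt_of_lt_of_le (by positivity) halb
  set ρ : ℝ := min (a / (2 * L)) (1 / 4) with hρdef
  have hρpos : 0 < ρ := lt_min (by positivity) (by norm_num)
  have hρ4 : ρ ≤ 1 / 4 := min_le_right _ _
  -- nonvanishing on ball y₀ ρ
  have hy₀34 : y₀ ∈ ball (0 : EuclideanSpace ℝ (Fin d)) (3 / 4) := by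
    rw [mem_ball, dist_zero_right]; linarith
  have hnv : ∀ z ∈ ball y₀ ρ, ψ (x₀ + r • z) ≠ 0 := by
    intro z hz
    have hz34 : z ∈ ball (0 : EuclideanSpace ℝ (Fin d)) (3 / 4) := by
      rw [mem_ball, dist_zero_right]
      calc ‖z‖ ≤ ‖z - y₀‖ + ‖y₀‖ := by simpa using norm_add_le (z - y₀) y₀
        _ < ρ + 1/2 := by
            have h := mem_ball.mp hz; rw [dist_eq_norm] at h; linarith
        _ ≤ 3/4 := by linarith
    have hlipz := hlip y₀ hy₀34 z hz34
    have hdz : dist y₀ z < ρ := by rw [dist_comm]; exact mem_ball.mp hz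
    have hLd : L * dist y₀ z ≤ a / 2 := by
      have hρa : ρ ≤ a / (2 * L) := min_le_left _ _
      have : L * dist y₀ z ≤ L * ρ := by
        exact mul_le_mul_of_nonneg_left hdz.le hL.le
      calc L * dist y₀ z ≤ L * ρ := this
        _ ≤ L * (a / (2 * L)) := mul_le_mul_of_nonneg_left hρa hL.le
        _ = a / 2 := by field_simp
    have huy₀ : ‖c • ψ (x₀ + r • y₀)‖ = a := by
      rw [hxy₀, norm_smul, Real.norm_eq_abs, abs_of_pos hc, hadef, hMdef]
    have hlow : a / 2 ≤ ‖c • ψ (x₀ + r • z)‖ := by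
      have := norm_sub_norm_le (c • ψ (x₀ + r • y₀)) (c • ψ (x₀ + r • z))
      rw [huy₀] at this
      have h2 : ‖c • ψ (x₀ + r • y₀) - c • ψ (x₀ + r • z)‖ ≤ a / 2 := hlipz.trans hLd
      linarith
    intro h0
    rw [h0, smul_zero, norm_zero] at hlow
    linarith
  -- the ball in x-space is in the nonvanishing set
  have hsubU : ball (x₀ + r • y₀) (ρ * r) ⊆ {x ∈ Ω | ψ x ≠ 0} := by
    intro x hx
    set z : EuclideanSpace ℝ (Fin d) := r⁻¹ • (x - x₀) with hzdef
    have hxz : x₀ + r • z = x := by rw [hzdef, smul_inv_smul₀ hr.ne']; abel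
    have hzb : z ∈ ball y₀ ρ := by
      rw [mem_ball, dist_eq_norm]
      have : z - y₀ = r⁻¹ • (x - (x₀ + r • y₀)) := by
        rw [hxy₀, hzdef, hy₀def, ← smul_sub]
        congr 1
        abel
      rw [this, norm_smul, norm_inv, Real.norm_eq_abs, abs_of_pos hr, ← dist_eq_norm]
      have := mem_ball.mp hx
      rw [inv_mul_lt_iff₀ hr]
      calc dist x (x₀ + r • y₀) < ρ * r := this
        _ = r * ρ := by ring
    constructor
    · apply hball
      rw [mem_ball, dist_eq_norm, ← hxz]
      have : x₀ + r • z - x₀ = r • z := by abel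
      rw [this, norm_smul, Real.norm_eq_abs, abs_of_pos hr]
      have hzn : ‖z‖ < 3 / 4 := by
        calc ‖z‖ ≤ ‖z - y₀‖ + ‖y₀‖ := by simpa using norm_add_le (z - y₀) y₀
          _ < ρ + 1/2 := by
              have h := mem_ball.mp hzb; rw [dist_eq_norm] at h; linarith
          _ ≤ 3/4 := by linarith
      nlinarith
    · rw [← hxz]; exact hnv z hzb
  -- conclude
  have hstep : ENNReal.ofReal (ρ * r) ≤ inrad {x ∈ Ω | ψ x ≠ 0} := by
    apply le_iSup_of_le (ENNReal.ofReal (ρ * r))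
    exact le_iSup_of_le ⟨x₀ + r • y₀, by rw [EMetric.ball, Metric.emetric_ball]; exact hsubU⟩ le_rfl
  refine le_trans (ENNReal.ofReal_le_ofReal ?_) hstep
  apply mul_le_mul_of_nonneg_right _ hr.le
  apply min_le_min _ le_rfl
  have h1 : Real.sqrt θ ≤ a * Real.sqrt V₀ := by
    rw [div_le_iff₀ hsV₀] at halb; exact halb
  rw [div_le_div_iff₀ (by positivity) (by positivity)]
  calc Real.sqrt θ * (2 * L) ≤ (a * Real.sqrt V₀) * (2 * L) := by nlinarith
    _ = a * (2 * L * Real.sqrt V₀) := by ring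
end
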